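/- Suppose a path τ crosses I×J with ncost(τ_I) ≤ ε, and let I'×J' be a w'-box (w' ≤ μ(I) = w) that (1-δ)-covers τ. Then the adjusted diagonal extension I×J'' of I'×J' within I×J satisfies: I×J'' (1-(ε + δ·w'/w))-covers τ and ncost(I×J'') ≤ 3ε + 2δ·w'/w. -/

import Mathlib

open List

/-- Costs for the Levenshtein distance (removed from Mathlib; restored with its old meaning). -/
structure Levenshtein.Cost (α β δ : Type*) where
  delete : α → δ
  insert : β → δ
  substitute : α → β → δ

/-- The default cost structure: unit costs, zero-cost substitution of equal characters. -/
def Levenshtein.defaultCost {α : Type*} [DecidableEq α] : Levenshtein.Cost α α ℕ where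
  delete _ := 1
  insert _ := 1
  substitute a b := if a = b then 0 else 1

/-- Levenshtein distance (removed from Mathlib; restored by its defining recursion). -/
def levenshtein {α β δ : Type*} [AddZeroClass δ] [Min δ] (C : Levenshtein.Cost α β δ) :
    List α → List β → δ
  | [], [] => 0
  | x :: xs, [] => C.delete x + levenshtein C xs []
  | [], y :: ys => C.insert y + levenshtein C [] ys
  | x :: xs, y :: ys =>
    min (C.delete x + levenshtein C xs (y :: ys))
      (min (C.insert y + levenshtein C (x :: xs) ys) (C.substitute x y + levenshtein C xs ys))

/-- Edit distance between two lists (Levenshtein distance with unit costs). -/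
def edist {α : Type*} [DecidableEq α] (x y : List α) : ℕ :=
  levenshtein Levenshtein.defaultCost x y

/-- The substring of `x` indexed by the interval `I = {I.1, ..., I.2}` minus its minimum,
i.e. the characters `x_{I.1+1}, ..., x_{I.2}` (1-indexed). -/
def sub {α : Type*} (x : List α) (I : ℕ × ℕ) : List α :=
  (x.drop I.1).take (I.2 - I.1)

/-- A single step in a grid graph: horizontal, vertical, or diagonal. -/
def IsStep (p q : ℕ × ℕ) : Prop :=
  q = (p.1 + 1, p.2) ∨ q = (p.1, p.2 + 1) ∨ q = (p.1 + 1, p.2 + 1)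

/-- Cost of a step in the grid graph `G_{x,y}`: H- and V-steps cost 1, a D-step from `p`
costs 0 iff `x_{p.1+1} = y_{p.2+1}`. -/
def stepCost {α : Type*} [DecidableEq α] (x y : List α) (p q : ℕ × ℕ) : ℕ :=
  if q = (p.1 + 1, p.2 + 1) then (if x[p.1]? = y[p.2]? then 0 else 1) else 1

/-- Cost of a path (list of vertices) in `G_{x,y}`. -/
def pathCost {α : Type*} [DecidableEq α] (x y : List α) (τ : List (ℕ × ℕ)) : ℕ :=
  ((τ.zip τ.tail).map (fun e => stepCost x y e.1 e.2)).sum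

def IsPath (τ : List (ℕ × ℕ)) : Prop := τ.Chain' IsStep

def IsPathFrom (τ : List (ℕ × ℕ)) (a b : ℕ × ℕ) : Prop :=
  IsPath τ ∧ τ.head? = some a ∧ τ.getLast? = some b

/-- Minimum cost of a corner-to-corner path in the box `I × J` of `G_{x,y}`. -/
noncomputable def boxCost {α : Type*} [DecidableEq α] (x y : List α) (I J : ℕ × ℕ) : ℕ :=
  sInf {c | ∃ τ, IsPathFrom τ (I.1, J.1) (I.2, J.2) ∧ pathCost x y τ = c}

/-- A path crosses the box `I × J`: all its vertices lie in the box and its horizontal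
projection is exactly `I`. -/
def Crosses (τ : List (ℕ × ℕ)) (I J : ℕ × ℕ) : Prop :=
  IsPath τ ∧ τ ≠ [] ∧
  (∀ v ∈ τ, I.1 ≤ v.1 ∧ v.1 ≤ I.2 ∧ J.1 ≤ v.2 ∧ v.2 ≤ J.2) ∧
  τ.head?.map Prod.fst = some I.1 ∧ τ.getLast?.map Prod.fst = some I.2

/-- `σ` is the minimal subpath `τ_I` of `τ` whose horizontal projection is `I`. -/
def IsCrossSubpath (τ σ : List (ℕ × ℕ)) (I : ℕ × ℕ) : Prop :=
  σ <:+: τ ∧ σ ≠ [] ∧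
  (∀ v ∈ σ, I.1 ≤ v.1 ∧ v.1 ≤ I.2) ∧
  σ.head?.map Prod.fst = some I.1 ∧ σ.getLast?.map Prod.fst = some I.2 ∧
  (∀ v ∈ σ.tail, v.1 ≠ I.1) ∧ (∀ v ∈ σ.dropLast, v.1 ≠ I.2)

/-- The box `I × J` `(1-δ)`-covers a path whose relevant subpath is `σ`: the start (end)
vertex of `σ` is within `δ·μ(I)` vertical units of the lower-left (upper-right) corner. -/
def CoversAt (δ : ℚ) (I J : ℕ × ℕ) (σ : List (ℕ × ℕ)) : Prop :=
  ∃ s e : ℕ × ℕ, σ.head? = some s ∧ σ.getLast? = some e ∧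
    |(s.2 : ℚ) - (J.1 : ℚ)| ≤ δ * ((I.2 : ℚ) - (I.1 : ℚ)) ∧
    |(e.2 : ℚ) - (J.2 : ℚ)| ≤ δ * ((I.2 : ℚ) - (I.1 : ℚ))

section Aux
variable {α : Type*} [DecidableEq α] (x y : List α)

@[simp] lemma pathCost_nil : pathCost x y [] = 0 := rfl
@[simp] lemma pathCost_single (p : ℕ × ℕ) : pathCost x y [p] = 0 := rfl
lemma pathCost_cons_cons (p q : ℕ × ℕ) (t : List (ℕ × ℕ)) :
    pathCost x y (p::q::t) = stepCost x y p q + pathCost x y (q::t) := rfl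

lemma stepCost_le_one (p q : ℕ × ℕ) : stepCost x y p q ≤ 1 := by
  unfold stepCost; split_ifs <;> simp

lemma isStep_bounds {p q : ℕ × ℕ} (h : IsStep p q) :
    p.1 ≤ q.1 ∧ q.1 ≤ p.1 + 1 ∧ p.2 ≤ q.2 ∧ q.2 ≤ p.2 + 1 := by
  rcases h with h | h | h <;> subst h <;> simp

lemma step_slope {p q : ℕ × ℕ} (h : IsStep p q) :
    |((q.2:ℤ) - q.1) - ((p.2:ℤ) - p.1)| ≤ stepCost x y p q := by
  rcases h with h | h | h <;> subst h
  · have h1 : stepCost x y p (p.1+1, p.2) = 1 := by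
      unfold stepCost; rw [if_neg]; simp [Prod.ext_iff]
    rw [h1]
    rw [show (((p.1+1, p.2).2:ℤ) - (p.1+1, p.2).1) - ((p.2:ℤ) - p.1) = -1 by push_cast; ring]
    norm_num
  · have h1 : stepCost x y p (p.1, p.2+1) = 1 := by
      unfold stepCost; rw [if_neg]; simp [Prod.ext_iff]
    rw [h1]
    rw [show (((p.1, p.2+1).2:ℤ) - (p.1, p.2+1).1) - ((p.2:ℤ) - p.1) = 1 by push_cast; ring]
    norm_num
  · rw [show (((p.1+1, p.2+1).2:ℤ) - (p.1+1, p.2+1).1) - ((p.2:ℤ) - p.1) = 0 by push_cast; ring]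
    simp

lemma path_slope (σ : List (ℕ × ℕ)) (hc : Chain' IsStep σ) :
    ∀ a b : ℕ × ℕ, σ.head? = some a → σ.getLast? = some b →
      |((b.2:ℤ) - b.1) - ((a.2:ℤ) - a.1)| ≤ pathCost x y σ := by
  induction σ with
  | nil => intro a b ha; simp at ha
  | cons p t ih =>
    intro a b ha hb
    simp only [head?_cons, Option.some.injEq] at ha; subst ha
    cases t with
    | nil => simp at hb; subst hb; simp
    | cons q t' =>
      rw [List.Chain', List.isChain_cons_cons] at hc
      rw [List.getLast?_cons_cons] at hb
      have ihq := ih hc.2 q b rfl hb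
      have hst := step_slope x y hc.1
      rw [pathCost_cons_cons]
      calc |((b.2:ℤ) - b.1) - ((p.2:ℤ) - p.1)|
          ≤ |((b.2:ℤ) - b.1) - ((q.2:ℤ) - q.1)| + |((q.2:ℤ) - q.1) - ((p.2:ℤ) - p.1)| :=
            abs_sub_le _ _ _
        _ ≤ (pathCost x y (q :: t') : ℤ) + (stepCost x y p q : ℤ) := by gcongr
        _ = ((stepCost x y p q + pathCost x y (q :: t') : ℕ) : ℤ) := by push_cast; ring

lemma path_mono (σ : List (ℕ × ℕ)) (hc : Chain' IsStep σ) :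
    ∀ a b : ℕ × ℕ, σ.head? = some a → σ.getLast? = some b → a.1 ≤ b.1 ∧ a.2 ≤ b.2 := by
  induction σ with
  | nil => intro a b ha; simp at ha
  | cons p t ih =>
    intro a b ha hb
    simp only [head?_cons, Option.some.injEq] at ha; subst ha
    cases t with
    | nil => simp at hb; subst hb; simp
    | cons q t' =>
      rw [List.Chain', List.isChain_cons_cons] at hc
      rw [List.getLast?_cons_cons] at hb
      have ihq := ih hc.2 q b rfl hb
      have h1 := isStep_bounds hc.1
      omega

lemma pathCost_append_cons (u : List (ℕ × ℕ)) (b : ℕ × ℕ) (t : List (ℕ × ℕ)) :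
    pathCost x y (u ++ b :: t) = pathCost x y (u ++ [b]) + pathCost x y (b :: t) := by
  induction u with
  | nil => simp
  | cons p u' ih =>
    cases u' with
    | nil => simp [pathCost_cons_cons]
    | cons p' u'' =>
      simp only [cons_append, pathCost_cons_cons] at ih ⊢
      omega

def sp (u v : ℕ) : ℕ → ℕ → ℕ → List (ℕ × ℕ)
  | 0, i, r => [(i, r)]
  | (k+1), i, r => (i, r) :: sp u v k (i+u) (r+v)

lemma sp_eq_cons (u v k i r : ℕ) : ∃ t, sp u v k i r = (i, r) :: t := by
  cases k <;> exact ⟨_, rfl⟩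

lemma sp_head (u v k i r : ℕ) : (sp u v k i r).head? = some (i, r) := by
  cases k <;> rfl

lemma sp_spec (u v : ℕ) (huv : u = 1 ∧ v = 0 ∨ u = 0 ∧ v = 1 ∨ u = 1 ∧ v = 1) :
    ∀ k i r : ℕ, Chain' IsStep (sp u v k i r) ∧
      (sp u v k i r).getLast? = some (i + k*u, r + k*v) ∧
      pathCost x y (sp u v k i r) ≤ k := by
  intro k
  induction k with
  | zero => intro i r; refine ⟨by simp [sp, List.Chain'], by simp [sp], by simp [sp]⟩
  | succ k ih =>
    intro i r
    obtain ⟨h1, h2, h3⟩ := ih (i+u) (r+v)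
    have hcons : sp u v (k+1) i r = (i, r) :: sp u v k (i+u) (r+v) := rfl
    obtain ⟨t, ht⟩ := sp_eq_cons u v k (i+u) (r+v)
    have hstep : IsStep (i, r) (i+u, r+v) := by
      rcases huv with ⟨hu, hv⟩ | ⟨hu, hv⟩ | ⟨hu, hv⟩ <;> subst hu <;> subst hv
      · exact Or.inl rfl
      · exact Or.inr (Or.inl rfl)
      · exact Or.inr (Or.inr rfl)
    refine ⟨?_, ?_, ?_⟩
    · rw [hcons, List.Chain', List.isChain_cons]
      exact ⟨fun b hb => by rw [sp_head] at hb; injection hb with h; rw [← h]; exact hstep, h1⟩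
    · rw [hcons, ht, List.getLast?_cons_cons, ← ht, h2]
      congr 1 <;> ring_nf
    · rw [hcons, ht, pathCost_cons_cons, ← ht]
      have := stepCost_le_one x y (i, r) (i+u, r+v)
      omega

lemma join {σ₁ σ₂ : List (ℕ × ℕ)} (h1 : Chain' IsStep σ₁) (h2 : Chain' IsStep σ₂)
    {v : ℕ × ℕ} (hl1 : σ₁.getLast? = some v) (hh2 : σ₂.head? = some v) :
    ∃ σ₃, Chain' IsStep σ₃ ∧ σ₃.head? = σ₁.head? ∧ σ₃.getLast? = σ₂.getLast? ∧
      pathCost x y σ₃ = pathCost x y σ₁ + pathCost x y σ₂ := by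
  have hne1 : σ₁ ≠ [] := by rintro rfl; simp at hl1
  obtain ⟨t₂, rfl⟩ : ∃ t₂, σ₂ = v :: t₂ := by
    cases σ₂ with
    | nil => simp at hh2
    | cons a t => simp only [head?_cons, Option.some.injEq] at hh2; exact ⟨t, by rw [hh2]⟩
  have hd : σ₁.dropLast ++ [v] = σ₁ := List.dropLast_append_getLast? v hl1
  refine ⟨σ₁.dropLast ++ v :: t₂, ?_, ?_, ?_, ?_⟩
  · have h1' := h1; rw [← hd, List.Chain', List.isChain_append] at h1'
    rw [List.Chain', List.isChain_append]
    exact ⟨h1'.1, h2, fun a ha b hb => by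
      simp only [head?_cons, Option.mem_def, Option.some.injEq] at hb
      subst hb; exact h1'.2.2 a ha v (by simp)⟩
  · conv_rhs => rw [← hd]
    simp
  · rw [List.getLast?_append, List.getLast?_eq_getLast (l := v :: t₂) (by simp)]
    rfl
  · rw [pathCost_append_cons x y _ v t₂, hd]

lemma top_lemma (σ : List (ℕ × ℕ)) (hc : Chain' IsStep σ) :
    ∀ c a i2 b hi : ℕ, σ.head? = some (c, a) → σ.getLast? = some (i2, b) → a ≤ hi →
    ∃ σ₂, Chain' IsStep σ₂ ∧ σ₂.head? = some (c, a) ∧ σ₂.getLast? = some (i2, hi) ∧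
      (pathCost x y σ₂ : ℤ) ≤ (pathCost x y σ : ℤ) + |(b:ℤ) - hi| := by
  induction σ with
  | nil => intro c a i2 b hi ha; simp at ha
  | cons p t ih =>
    intro c a i2 b hi hh hl hahi
    simp only [head?_cons, Option.some.injEq] at hh; subst hh
    cases t with
    | nil =>
      simp only [getLast?_singleton, Option.some.injEq, Prod.mk.injEq] at hl
      obtain ⟨hi2, hb⟩ := hl; subst hi2; subst hb
      obtain ⟨c1, c2, c3⟩ := sp_spec x y 0 1 (Or.inr (Or.inl ⟨rfl, rfl⟩)) (hi - a) c a
      refine ⟨sp 0 1 (hi - a) c a, c1, sp_head 0 1 _ c a, ?_, ?_⟩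
      · rw [c2]; congr 2 <;> omega
      · have h0 : pathCost x y [(c, a)] = 0 := rfl
        rw [h0, abs_of_nonpos (by push_cast; omega : ((a:ℤ) - hi) ≤ 0)]
        push_cast
        omega
    | cons q t' =>
      rw [List.Chain', List.isChain_cons_cons] at hc
      rw [List.getLast?_cons_cons] at hl
      by_cases hq : q.2 ≤ hi
      · obtain ⟨σ₂, c2, h2, l2, b2⟩ := ih hc.2 q.1 q.2 i2 b hi (by simp) hl hq
        obtain ⟨t₂, rfl⟩ : ∃ t₂, σ₂ = q :: t₂ := by
          cases σ₂ with
          | nil => simp at h2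
          | cons z t₂ =>
            simp only [head?_cons, Option.some.injEq] at h2
            exact ⟨t₂, by rw [h2]⟩
        refine ⟨(c, a) :: q :: t₂, List.isChain_cons_cons.mpr ⟨hc.1, c2⟩, rfl, ?_, ?_⟩
        · rw [List.getLast?_cons_cons]; exact l2
        · rw [pathCost_cons_cons, pathCost_cons_cons x y (c,a) q t']
          push_cast
          have : (stepCost x y (c, a) q : ℤ) = stepCost x y (c, a) q := rfl
          linarith
      · -- q.2 = hi + 1, a = hi
        have hbnd := isStep_bounds hc.1
        have hmono := path_mono (q :: t') hc.2 q (i2, b) rfl hl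
        have hslope := path_slope x y ((c, a) :: q :: t') (List.isChain_cons_cons.mpr hc) (c, a) (i2, b) rfl
          (by rw [List.getLast?_cons_cons]; exact hl)
        have hci2 : c ≤ i2 := by
          have := path_mono ((c, a) :: q :: t') (List.isChain_cons_cons.mpr hc) (c, a) (i2, b) rfl
            (by rw [List.getLast?_cons_cons]; exact hl)
          exact this.1
        have hahi' : a = hi := by omega
        have hbhi : hi ≤ b := by simp at hmono hbnd; omega
        obtain ⟨c1, c2, c3⟩ := sp_spec x y 1 0 (Or.inl ⟨rfl, rfl⟩) (i2 - c) c a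
        refine ⟨sp 1 0 (i2 - c) c a, c1, sp_head 1 0 _ c a, ?_, ?_⟩
        · rw [c2]; congr 2 <;> omega
        · rw [abs_le] at hslope
          rw [abs_of_nonneg (by push_cast; omega : (0:ℤ) ≤ (b:ℤ) - hi)]
          have hc3 : (pathCost x y (sp 1 0 (i2 - c) c a) : ℤ) ≤ (i2 : ℤ) - c := by push_cast; omega
          simp only at hslope
          push_cast at hslope ⊢
          linarith [hslope.1]

lemma bot_lemma (σ : List (ℕ × ℕ)) (hc : Chain' IsStep σ) :
    ∀ i1 a d b lo : ℕ, σ.head? = some (i1, a) → σ.getLast? = some (d, b) → lo ≤ b →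
    ∃ σ₂, Chain' IsStep σ₂ ∧ σ₂.head? = some (i1, lo) ∧ σ₂.getLast? = some (d, b) ∧
      (pathCost x y σ₂ : ℤ) ≤ (pathCost x y σ : ℤ) + |(a:ℤ) - lo| := by
  induction σ with
  | nil => intro i1 a d b lo ha; simp at ha
  | cons p t ih =>
    intro i1 a d b lo hh hl hlob
    simp only [head?_cons, Option.some.injEq] at hh; subst hh
    by_cases hla : lo ≤ a
    · -- prepend a vertical climb from (i1, lo) to (i1, a)
      obtain ⟨c1, c2, c3⟩ := sp_spec x y 0 1 (Or.inr (Or.inl ⟨rfl, rfl⟩)) (a - lo) i1 lo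
      have c2' : (sp 0 1 (a - lo) i1 lo).getLast? = some (i1, a) := by
        rw [c2]; congr 2 <;> omega
      obtain ⟨σ₃, d1, d2, d3, d4⟩ := join x y c1 hc c2' rfl
      refine ⟨σ₃, d1, ?_, ?_, ?_⟩
      · rw [d2, sp_head]
      · rw [d3, hl]
      · rw [d4, abs_of_nonneg (by push_cast; omega : (0:ℤ) ≤ (a:ℤ) - lo)]
        push_cast
        omega
    · -- lo > a
      cases t with
      | nil =>
        simp only [getLast?_singleton, Option.some.injEq, Prod.mk.injEq] at hl
        omega
      | cons q t' =>
        rw [List.Chain', List.isChain_cons_cons] at hc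
        rw [List.getLast?_cons_cons] at hl
        obtain ⟨σ₂, c2, h2, l2, b2⟩ := ih hc.2 q.1 q.2 d b lo (by simp) hl hlob
        have hbnd := isStep_bounds hc.1
        simp only at hbnd
        rcases hc.1 with hstep | hstep | hstep
        · -- horizontal step: q = (i1+1, a)
          obtain ⟨t₂, rfl⟩ : ∃ t₂, σ₂ = (q.1, lo) :: t₂ := by
            cases σ₂ with
            | nil => simp at h2
            | cons z t₂ =>
              simp only [head?_cons, Option.some.injEq] at h2
              exact ⟨t₂, by rw [h2]⟩
          refine ⟨(i1, lo) :: (q.1, lo) :: t₂, ?_, rfl, ?_, ?_⟩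
          · refine List.isChain_cons_cons.mpr ⟨?_, c2⟩
            left
            rw [hstep]
          · rw [List.getLast?_cons_cons]; exact l2
          · rw [pathCost_cons_cons, pathCost_cons_cons x y (i1, a) q t']
            have hsc : stepCost x y (i1, lo) (q.1, lo) = 1 := by
              unfold stepCost
              rw [if_neg (by simp [Prod.ext_iff])]
            have hsc2 : stepCost x y (i1, a) q = 1 := by
              unfold stepCost
              rw [if_neg (by rw [hstep]; simp [Prod.ext_iff])]
            rw [hsc, hsc2]
            rw [abs_of_nonpos (by push_cast; omega : ((q.2:ℤ) - lo) ≤ 0)] at b2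
            rw [abs_of_nonpos (by push_cast; omega : ((a:ℤ) - lo) ≤ 0)]
            have hq2 : q.2 = a := by rw [hstep]
            push_cast at b2 ⊢
            omega
        · -- vertical step: q = (i1, a+1)
          refine ⟨σ₂, c2, ?_, l2, ?_⟩
          · rw [h2, hstep]
          · rw [pathCost_cons_cons x y (i1, a) q t']
            have hsc2 : stepCost x y (i1, a) q ≤ 1 := stepCost_le_one x y _ _
            rw [abs_of_nonpos (by push_cast; omega : ((q.2:ℤ) - lo) ≤ 0)] at b2
            rw [abs_of_nonpos (by push_cast; omega : ((a:ℤ) - lo) ≤ 0)]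
            have hq2 : q.2 = a + 1 := by rw [hstep]
            push_cast at b2 ⊢
            omega
        · -- diagonal step: q = (i1+1, a+1)
          obtain ⟨t₂, rfl⟩ : ∃ t₂, σ₂ = (q.1, lo) :: t₂ := by
            cases σ₂ with
            | nil => simp at h2
            | cons z t₂ =>
              simp only [head?_cons, Option.some.injEq] at h2
              exact ⟨t₂, by rw [h2]⟩
          refine ⟨(i1, lo) :: (q.1, lo) :: t₂, ?_, rfl, ?_, ?_⟩
          · refine List.isChain_cons_cons.mpr ⟨?_, c2⟩
            left
            rw [hstep]
          · rw [List.getLast?_cons_cons]; exact l2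
          · rw [pathCost_cons_cons, pathCost_cons_cons x y (i1, a) q t']
            have hsc : stepCost x y (i1, lo) (q.1, lo) = 1 := by
              unfold stepCost
              rw [if_neg (by simp [Prod.ext_iff])]
            rw [hsc]
            rw [abs_of_nonpos (by push_cast; omega : ((q.2:ℤ) - lo) ≤ 0)] at b2
            rw [abs_of_nonpos (by push_cast; omega : ((a:ℤ) - lo) ≤ 0)]
            have hq2 : q.2 = a + 1 := by rw [hstep]
            push_cast at b2 ⊢
            omega

lemma box_bound (σ : List (ℕ × ℕ)) (hc : Chain' IsStep σ) (i1 a i2 b lo hi : ℕ)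
    (hh : σ.head? = some (i1, a)) (hl : σ.getLast? = some (i2, b))
    (h12 : i1 ≤ i2) (hsq : hi = lo + (i2 - i1)) :
    (boxCost x y (i1, i2) (lo, hi) : ℤ) ≤
      (pathCost x y σ : ℤ) + |(a:ℤ) - lo| + |(b:ℤ) - hi| := by
  have hmem : ∀ σ₂ : List (ℕ × ℕ), Chain' IsStep σ₂ → σ₂.head? = some (i1, lo) →
      σ₂.getLast? = some (i2, hi) → boxCost x y (i1, i2) (lo, hi) ≤ pathCost x y σ₂ :=
    fun σ₂ h1 h2 h3 => Nat.sInf_le ⟨σ₂, ⟨h1, h2, h3⟩, rfl⟩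
  by_cases hlob : lo ≤ b
  · obtain ⟨σ₂, c2, h2, l2, b2⟩ := bot_lemma x y σ hc i1 a i2 b lo hh hl hlob
    obtain ⟨σ₃, c3, h3, l3, b3⟩ := top_lemma x y σ₂ c2 i1 lo i2 b hi h2 l2 (by omega)
    have hb := hmem σ₃ c3 h3 l3
    have h1 : (pathCost x y σ₃ : ℤ) ≤ (pathCost x y σ : ℤ) + |(a:ℤ) - lo| + |(b:ℤ) - hi| := by
      linarith
    calc (boxCost x y (i1, i2) (lo, hi) : ℤ) ≤ (pathCost x y σ₃ : ℤ) := by exact_mod_cast hb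
      _ ≤ _ := h1
  · -- b < lo : use the pure diagonal path
    obtain ⟨c1, c2, c3⟩ := sp_spec x y 1 1 (Or.inr (Or.inr ⟨rfl, rfl⟩)) (i2 - i1) i1 lo
    have c2' : (sp 1 1 (i2 - i1) i1 lo).getLast? = some (i2, hi) := by
      rw [c2]; congr 2 <;> omega
    have hb := hmem _ c1 (sp_head 1 1 _ i1 lo) c2'
    have habs1 : (0:ℤ) ≤ |(a:ℤ) - lo| := abs_nonneg _
    have habs2 : |(b:ℤ) - hi| = (hi:ℤ) - b := by
      rw [abs_of_nonpos (by push_cast; omega)]; ring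
    rw [habs2]
    have : (boxCost x y (i1, i2) (lo, hi) : ℤ) ≤ ((i2 - i1 : ℕ) : ℤ) := by exact_mod_cast hb.trans c3
    push_cast at this ⊢
    omega


lemma head?_append_left_eq (A z1 z2 : List (ℕ × ℕ)) (h : z1.head? = z2.head?) :
    (A ++ z1).head? = (A ++ z2).head? := by
  rw [List.head?_append, List.head?_append, h]

lemma getLast?_append_of_ne_nil (z w : List (ℕ × ℕ)) (h : w ≠ []) :
    (z ++ w).getLast? = w.getLast? := by
  rw [List.getLast?_append, List.getLast?_eq_getLast (l := w) h]
  rfl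

end Aux

/-- the adjusted diagonal extension I×J'' of a w'-box I'×J' that
(1-δ)-covers τ satisfies: I×J'' (1-(ε+δw'/w))-covers τ and
ncost(I×J'') ≤ 3ε + 2δw'/w. -/
theorem stmt9 {α : Type*} [DecidableEq α] (x y : List α) (τ σI σ' : List (ℕ × ℕ))
    (I J I' J' : ℕ × ℕ) (ε δ : ℚ)
    (hcross : Crosses τ I J)
    (hσI : IsCrossSubpath τ σI I)
    (hεcost : (pathCost x y σI : ℚ) / ((I.2 : ℚ) - (I.1 : ℚ)) ≤ ε)
    (hIw : I.1 < I.2) (hI' : I'.1 < I'.2)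
    (hsub : I.1 ≤ I'.1 ∧ I'.2 ≤ I.2)
    (hJ'sq : J'.2 - J'.1 = I'.2 - I'.1) (hJ'sub : J.1 ≤ J'.1 ∧ J'.2 ≤ J.2)
    (hJw : I.2 - I.1 ≤ J.2 - J.1)
    (hσ' : IsCrossSubpath τ σ' I')
    (hcov : CoversAt δ I' J' σ') :
    -- the adjusted diagonal extension I × J'' of I' × J' within I × J:
    let w : ℚ := (I.2 : ℚ) - (I.1 : ℚ)
    let w' : ℚ := (I'.2 : ℚ) - (I'.1 : ℚ)
    let jlo : ℕ := (max (min ((J'.1 : ℤ) + (I.1 : ℤ) - (I'.1 : ℤ))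
      ((J.2 : ℤ) - ((I.2 - I.1 : ℕ) : ℤ))) (J.1 : ℤ)).toNat
    CoversAt (ε + δ * w' / w) I (jlo, jlo + (I.2 - I.1)) σI ∧
    (boxCost x y I (jlo, jlo + (I.2 - I.1)) : ℚ) / w ≤ 3 * ε + 2 * δ * w' / w := by
  intro w w' jlo
  have hwE : w = (I.2:ℚ) - (I.1:ℚ) := rfl
  have hw'E : w' = (I'.2:ℚ) - (I'.1:ℚ) := rfl
  have hjloZ : (jlo:ℤ) =
      max (min ((J'.1:ℤ) + I.1 - I'.1) ((J.2:ℤ) - ((I.2 - I.1 : ℕ):ℤ))) (J.1:ℤ) :=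
    Int.toNat_of_nonneg (by omega)
  clear_value w w' jlo
  obtain ⟨hτch, hτne, hτbox, hτh, hτl⟩ := hcross
  obtain ⟨hinf, hne, hcols, hhI, hlI, htlI, hdlI⟩ := hσI
  obtain ⟨hinf', hne', hcols', hh'2, hl'2, htl', hdl'⟩ := hσ'
  have hchI : Chain' IsStep σI := List.IsChain.infix hτch hinf
  have hch' : Chain' IsStep σ' := List.IsChain.infix hτch hinf'
  -- σ' has length at least 2
  have hlen2 : 2 ≤ σ'.length := by
    rcases σ' with _ | ⟨a0, _ | ⟨b0, l0⟩⟩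
    · exact absurd rfl hne'
    · simp at hh'2 hl'2; omega
    · simp
  -- endpoints
  have hsS : σI.head? = some (σI.head hne) := List.head?_eq_head hne
  set s := σI.head hne with hs_def
  have heS : σI.getLast? = some (σI.getLast hne) := List.getLast?_eq_getLast hne
  set e := σI.getLast hne with he_def
  have hs1 : s.1 = I.1 := by rw [hsS] at hhI; simpa using hhI
  have he1 : e.1 = I.2 := by rw [heS] at hlI; simpa using hlI
  have hs'S : σ'.head? = some (σ'.head hne') := List.head?_eq_head hne'
  set s' := σ'.head hne' with hs'_def
  have he'S : σ'.getLast? = some (σ'.getLast hne') := List.getLast?_eq_getLast hne'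
  set e' := σ'.getLast hne' with he'_def
  have hs'1 : s'.1 = I'.1 := by rw [hs'S] at hh'2; simpa using hh'2
  have he'1 : e'.1 = I'.2 := by rw [he'S] at hl'2; simpa using hl'2
  -- decompositions
  obtain ⟨tI, hσIc⟩ : ∃ t, σI = s :: t :=
    ⟨σI.tail, by rw [hs_def]; exact (List.cons_head_tail hne).symm⟩
  obtain ⟨t', hσ'c⟩ : ∃ t, σ' = s' :: t :=
    ⟨σ'.tail, by rw [hs'_def]; exact (List.cons_head_tail hne').symm⟩
  have hdle : σI.dropLast ++ [e] = σI := List.dropLast_append_getLast? e heS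
  obtain ⟨p2, t'', ht''⟩ : ∃ p2 t'', σ' = s' :: p2 :: t'' := by
    cases t' with
    | nil => rw [hσ'c] at hlen2; simp at hlen2
    | cons p2 t'' => exact ⟨p2, t'', hσ'c⟩
  -- split σ' at its end
  obtain ⟨r0, p0, hE2⟩ : ∃ r0 p0, σ' = r0 ++ [p0, e'] := by
    rcases hr : σ'.reverse with _ | ⟨q0, _ | ⟨p0, r0⟩⟩
    · rw [← List.length_reverse, hr] at hlen2; simp at hlen2
    · rw [← List.length_reverse, hr] at hlen2; simp at hlen2
    · have h1 : σ' = r0.reverse ++ [p0, q0] := by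
        rw [← List.reverse_reverse σ', hr]; simp
      have h2 : σ'.getLast? = some q0 := by
        rw [h1, show r0.reverse ++ [p0, q0] = (r0.reverse ++ [p0]) ++ [q0] by simp,
          List.getLast?_concat]
      rw [he'S] at h2
      injection h2 with h2
      exact ⟨r0.reverse, p0, by rw [h1, h2]⟩
  have hE : σ' = (r0 ++ [p0]) ++ [e'] := by rw [hE2]; simp
  have hp0dl : p0 ∈ σ'.dropLast := by
    rw [hE, List.dropLast_concat]; simp
  -- rows of s and e
  have hsJ := hτbox s (hinf.subset (by rw [hσIc]; simp))
  have heJ := hτbox e (hinf.subset (by rw [he_def]; exact List.getLast_mem hne))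
  -- pairwise monotonicity along τ
  have hpw : τ.Pairwise (fun p q : ℕ × ℕ => p.1 ≤ q.1 ∧ p.2 ≤ q.2) := by
    haveI : IsTrans (ℕ × ℕ) (fun p q : ℕ × ℕ => p.1 ≤ q.1 ∧ p.2 ≤ q.2) :=
      ⟨fun a b c h1 h2 => ⟨le_trans h1.1 h2.1, le_trans h1.2 h2.2⟩⟩
    exact List.isChain_iff_pairwise.mp
      (List.IsChain.imp (fun a b h => ⟨(isStep_bounds h).1, (isStep_bounds h).2.2.1⟩) hτch)
  obtain ⟨U, V, hUV⟩ := hinf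
  obtain ⟨U', V', hU'V'⟩ := hinf'
  have hpwτ := hpw
  rw [← hUV] at hpwτ
  rw [List.pairwise_append] at hpwτ
  have hUcol : ∀ u ∈ U, u.1 = I.1 := by
    intro u hu
    have huτ : u ∈ τ := by rw [← hUV]; simp [hu]
    refine le_antisymm ?_ (hτbox u huτ).1
    have h2 := (List.pairwise_append.mp hpwτ.1).2.2 u hu s (by rw [hσIc]; simp)
    omega
  have hVcol : ∀ v ∈ V, v.1 = I.2 := by
    intro v hv
    have hvτ : v ∈ τ := by rw [← hUV]; simp [hv]
    refine le_antisymm (hτbox v hvτ).2.1 ?_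
    have h2 := hpwτ.2.2 e
      (List.mem_append_right U (by rw [he_def]; exact List.getLast_mem hne)) v hv
    omega
  -- σ' starts no earlier than σI
  have hlen1 : U.length ≤ U'.length := by
    by_contra hcon
    push_neg at hcon
    have hp1 : U' ++ [s', p2] <+: τ := ⟨t'' ++ V', by rw [← hU'V', ht'']; simp⟩
    have hpp2 : U ++ [s] <+: τ := ⟨tI ++ V, by rw [← hUV, hσIc]; simp⟩
    have hpre := List.prefix_of_prefix_length_le hp1 hpp2 (by simp; omega)
    have hs'mem : s' ∈ U ++ [s] := hpre.subset (by simp)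
    have hp2mem : p2 ∈ U ++ [s] := hpre.subset (by simp)
    have hs'col : s'.1 = I.1 := by
      rcases List.mem_append.mp hs'mem with h | h
      · exact hUcol _ h
      · simp at h; rw [h, hs1]
    have hp2col : p2.1 = I.1 := by
      rcases List.mem_append.mp hp2mem with h | h
      · exact hUcol _ h
      · simp at h; rw [h, hs1]
    have hne2 : p2.1 ≠ I'.1 := htl' p2 (by rw [ht'']; simp)
    omega
  -- σ' ends no later than σI
  have hlenV : V.length ≤ V'.length := by
    by_contra hcon
    push_neg at hcon
    have hs1' : [p0, e'] ++ V' <:+ τ := ⟨U' ++ r0, by rw [← hU'V', hE2]; simp⟩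
    have hs2' : [e] ++ V <:+ τ :=
      ⟨U ++ σI.dropLast, by
        rw [← hUV, show (U ++ σI.dropLast) ++ ([e] ++ V) = (U ++ (σI.dropLast ++ [e])) ++ V
          by simp, hdle]⟩
    have hsuf := List.suffix_of_suffix_length_le hs1' hs2' (by simp; omega)
    have hp0mem : p0 ∈ [e] ++ V := hsuf.subset (by simp)
    have he'mem : e' ∈ [e] ++ V := hsuf.subset (by simp)
    have hp0col : p0.1 = I.2 := by
      rcases List.mem_append.mp hp0mem with h | h
      · simp at h; rw [h, he1]
      · exact hVcol _ h
    have he'col : e'.1 = I.2 := by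
      rcases List.mem_append.mp he'mem with h | h
      · simp at h; rw [h, he1]
      · exact hVcol _ h
    have hne3 : p0.1 ≠ I'.2 := hdl' p0 hp0dl
    omega
  -- σ' is an infix of σI
  have hUp : U <+: U' :=
    List.prefix_of_prefix_length_le (⟨σI ++ V, by rw [← hUV]; simp⟩ : U <+: τ)
      (⟨σ' ++ V', by rw [← hU'V']; simp⟩ : U' <+: τ) hlen1
  obtain ⟨A, hA⟩ := hUp
  have hVs : V <:+ V' :=
    List.suffix_of_suffix_length_le (⟨U ++ σI, by rw [← hUV]⟩ : V <:+ τ)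
      (⟨U' ++ σ', by rw [← hU'V']⟩ : V' <:+ τ) hlenV
  obtain ⟨B, hB⟩ := hVs
  have hdec : σI = A ++ σ' ++ B := by
    have h1 : U ++ (σI ++ V) = U ++ (A ++ (σ' ++ (B ++ V))) := by
      calc U ++ (σI ++ V) = τ := by rw [← hUV]; simp
        _ = U' ++ (σ' ++ V') := by rw [← hU'V']; simp
        _ = U ++ (A ++ (σ' ++ (B ++ V))) := by rw [← hA, ← hB]; simp
    have h2 := List.append_cancel_left h1
    have h3 : σI ++ V = (A ++ (σ' ++ B)) ++ V := by rw [h2]; simp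
    have h4 := List.append_cancel_right h3
    rw [h4, List.append_assoc]
  -- the prefix P = A ++ [s'] and suffix S = e' :: B of σI
  have hPpre : (A ++ [s']) <+: σI := ⟨t' ++ B, by rw [hdec, hσ'c]; simp⟩
  have hchP : Chain' IsStep (A ++ [s']) := hchI.prefix hPpre
  have hSsuf : (e' :: B) <:+ σI :=
    ⟨A ++ (r0 ++ [p0]), by
      rw [hdec, show (A ++ (r0 ++ [p0])) ++ (e' :: B) = A ++ (((r0 ++ [p0]) ++ [e']) ++ B)
        by simp, ← hE]; simp⟩
  have hchS : Chain' IsStep (e' :: B) := hchI.suffix hSsuf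
  have hPh : (A ++ [s']).head? = some s := by
    have h1 : (A ++ [s']).head? = (A ++ (s' :: (t' ++ B))).head? :=
      head?_append_left_eq A [s'] (s' :: (t' ++ B)) (by simp)
    rw [h1, show A ++ (s' :: (t' ++ B)) = A ++ σ' ++ B by rw [hσ'c]; simp, ← hdec, hsS]
  have hPl : (A ++ [s']).getLast? = some s' := List.getLast?_concat
  have hSh : (e' :: B).head? = some e' := rfl
  have hSl : (e' :: B).getLast? = some e := by
    have h1 : ((A ++ (r0 ++ [p0])) ++ (e' :: B)).getLast? = (e' :: B).getLast? :=
      getLast?_append_of_ne_nil _ _ (by simp)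
    rw [show (A ++ (r0 ++ [p0])) ++ (e' :: B) = A ++ (((r0 ++ [p0]) ++ [e']) ++ B) by simp,
      ← hE, ← List.append_assoc, ← hdec] at h1
    rw [← h1, heS]
  -- cost splitting
  have hKsplit : pathCost x y (A ++ [s']) + pathCost x y (e' :: B) ≤ pathCost x y σI := by
    have h1 : σI = A ++ s' :: (t' ++ B) := by rw [hdec, hσ'c]; simp
    have h2 : pathCost x y σI = pathCost x y (A ++ [s']) + pathCost x y (s' :: (t' ++ B)) := by
      rw [← pathCost_append_cons, ← h1]
    have h3 : s' :: (t' ++ B) = (r0 ++ [p0]) ++ (e' :: B) := by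
      rw [show s' :: (t' ++ B) = (s' :: t') ++ B by simp, ← hσ'c, hE]; simp
    have h4 : pathCost x y ((r0 ++ [p0]) ++ (e' :: B)) =
        pathCost x y ((r0 ++ [p0]) ++ [e']) + pathCost x y (e' :: B) :=
      pathCost_append_cons x y _ e' B
    rw [h2, h3, h4]
    omega
  -- slope facts
  have hslopeP := path_slope x y (A ++ [s']) hchP s s' hPh hPl
  have hslopeS := path_slope x y (e' :: B) hchS e' e hSh hSl
  have hslopeI := path_slope x y σI hchI s e hsS heS
  -- covering data of σ'
  obtain ⟨sc, ec, hscc, hecc, hcov1, hcov2⟩ := hcov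
  rw [hs'S] at hscc
  injection hscc with hscc
  rw [he'S] at hecc
  injection hecc with hecc
  rw [← hscc] at hcov1
  rw [← hecc] at hcov2
  -- now the numeric part
  have hwpos : (0:ℚ) < (I.2:ℚ) - I.1 := by
    rw [sub_pos]; exact_mod_cast hIw
  have hw'pos : (0:ℚ) < (I'.2:ℚ) - I'.1 := by
    rw [sub_pos]; exact_mod_cast hI'
  have hKEQ : (pathCost x y σI : ℚ) ≤ ε * ((I.2:ℚ) - I.1) := (div_le_iff₀ hwpos).mp hεcost
  have hsJ2 : (J.1:ℚ) ≤ (s.2:ℚ) ∧ (s.2:ℚ) ≤ (J.2:ℚ) :=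
    ⟨by exact_mod_cast hsJ.2.2.1, by exact_mod_cast hsJ.2.2.2⟩
  have heJ2 : (J.1:ℚ) ≤ (e.2:ℚ) ∧ (e.2:ℚ) ≤ (J.2:ℚ) :=
    ⟨by exact_mod_cast heJ.2.2.1, by exact_mod_cast heJ.2.2.2⟩
  have hslopeI2 : |((e.2:ℚ) - I.2) - ((s.2:ℚ) - I.1)| ≤ (pathCost x y σI : ℚ) := by
    have h0 := hslopeI
    rw [hs1, he1] at h0
    exact_mod_cast h0
  have hslopeP2 : |((s'.2:ℚ) - I'.1) - ((s.2:ℚ) - I.1)| ≤ (pathCost x y (A ++ [s']) : ℚ) := by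
    have h0 := hslopeP
    rw [hs1, hs'1] at h0
    exact_mod_cast h0
  have hslopeS2 : |((e.2:ℚ) - I.2) - ((e'.2:ℚ) - I'.2)| ≤ (pathCost x y (e' :: B) : ℚ) := by
    have h0 := hslopeS
    rw [he1, he'1] at h0
    exact_mod_cast h0
  rw [abs_le] at hslopeI2 hslopeP2 hslopeS2 hcov1 hcov2
  have hKsQ : (pathCost x y (A ++ [s']) : ℚ) + (pathCost x y (e' :: B) : ℚ) ≤
      (pathCost x y σI : ℚ) := by exact_mod_cast hKsplit
  have hK1nn : (0:ℚ) ≤ (pathCost x y (A ++ [s']) : ℚ) := by positivity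
  have hK2nn : (0:ℚ) ≤ (pathCost x y (e' :: B) : ℚ) := by positivity
  have hKnn : (0:ℚ) ≤ (pathCost x y σI : ℚ) := by positivity
  have hDnn : (0:ℚ) ≤ δ * ((I'.2:ℚ) - I'.1) := by linarith [hcov1.1, hcov1.2]
  obtain ⟨hJs1, hJs2⟩ := hJ'sub
  obtain ⟨hsub1, hsub2⟩ := hsub
  have hww' : (I'.2:ℚ) - I'.1 ≤ (I.2:ℚ) - I.1 := by
    have h1 : (I.1:ℚ) ≤ I'.1 := by exact_mod_cast hsub1
    have h2 : (I'.2:ℚ) ≤ I.2 := by exact_mod_cast hsub2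
    linarith
  have hJ'2Q : (J'.2:ℚ) = (J'.1:ℚ) + ((I'.2:ℚ) - I'.1) := by
    have h1 : J'.2 = J'.1 + (I'.2 - I'.1) := by omega
    rw [h1]
    push_cast [Nat.cast_sub hI'.le]
    ring
  have hwnz : ((I.2 - I.1 : ℕ):ℤ) = (I.2:ℤ) - I.1 := by omega
  have hL : (J.1:ℤ) ≤ (J.2:ℤ) - ((I.2 - I.1:ℕ):ℤ) := by
    have h1 : J'.1 < J'.2 := by omega
    have h2 : J.1 + (I.2 - I.1) ≤ J.2 := by omega
    omega
  have hLQ : (J.1:ℚ) + ((I.2:ℚ) - I.1) ≤ (J.2:ℚ) := by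
    have h2 : (J.1:ℤ) + ((I.2:ℤ) - I.1) ≤ (J.2:ℤ) := by omega
    exact_mod_cast h2
  have hMain : |(s.2:ℚ) - (jlo:ℚ)| ≤ ε * ((I.2:ℚ) - I.1) + δ * ((I'.2:ℚ) - I'.1) ∧
      |(e.2:ℚ) - ((jlo:ℚ) + ((I.2:ℚ) - I.1))| ≤ ε * ((I.2:ℚ) - I.1) + δ * ((I'.2:ℚ) - I'.1) ∧
      |(s.2:ℚ) - (jlo:ℚ)| + |(e.2:ℚ) - ((jlo:ℚ) + ((I.2:ℚ) - I.1))| + (pathCost x y σI : ℚ) ≤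
        3 * (ε * ((I.2:ℚ) - I.1)) + 2 * (δ * ((I'.2:ℚ) - I'.1)) := by
    rcases le_total ((J'.1:ℤ) + I.1 - I'.1) (J.1:ℤ) with hc1 | hc1
    · have hczZ : (jlo:ℤ) = (J.1:ℤ) := by rw [hjloZ]; omega
      have hcz : (jlo:ℚ) = (J.1:ℚ) := by exact_mod_cast hczZ
      have htq : (J'.1:ℚ) + I.1 - I'.1 ≤ (J.1:ℚ) := by exact_mod_cast hc1
      refine ⟨?_, ?_, ?_⟩
      · rw [abs_le]; constructor <;> linarith only [hslopeI2.1, hslopeI2.2, hslopeP2.1, hslopeP2.2, hslopeS2.1, hslopeS2.2, hKsQ, hKEQ, hK1nn, hK2nn, hKnn, hcov1.1, hcov1.2, hcov2.1, hcov2.2, hsJ2.1, hsJ2.2, heJ2.1, heJ2.2, hJ'2Q, hDnn, hww', hLQ, hcz, htq]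
      · rw [abs_le]; constructor <;> linarith only [hslopeI2.1, hslopeI2.2, hslopeP2.1, hslopeP2.2, hslopeS2.1, hslopeS2.2, hKsQ, hKEQ, hK1nn, hK2nn, hKnn, hcov1.1, hcov1.2, hcov2.1, hcov2.2, hsJ2.1, hsJ2.2, heJ2.1, heJ2.2, hJ'2Q, hDnn, hww', hLQ, hcz, htq]
      · rcases abs_cases ((s.2:ℚ) - (jlo:ℚ)) with ⟨ha1, _⟩ | ⟨ha1, _⟩ <;>
          rcases abs_cases ((e.2:ℚ) - ((jlo:ℚ) + ((I.2:ℚ) - I.1))) with ⟨ha2, _⟩ | ⟨ha2, _⟩ <;>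
          rw [ha1, ha2] <;> linarith only [hslopeI2.1, hslopeI2.2, hslopeP2.1, hslopeP2.2, hslopeS2.1, hslopeS2.2, hKsQ, hKEQ, hK1nn, hK2nn, hKnn, hcov1.1, hcov1.2, hcov2.1, hcov2.2, hsJ2.1, hsJ2.2, heJ2.1, heJ2.2, hJ'2Q, hDnn, hww', hLQ, hcz, htq]
    · rcases le_total ((J'.1:ℤ) + I.1 - I'.1) ((J.2:ℤ) - ((I.2 - I.1:ℕ):ℤ)) with hc2 | hc2
      · have hczZ : (jlo:ℤ) = (J'.1:ℤ) + I.1 - I'.1 := by rw [hjloZ]; omega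
        have hcz : (jlo:ℚ) = (J'.1:ℚ) + I.1 - I'.1 := by exact_mod_cast hczZ
        have htq : (0:ℚ) ≤ 0 := le_refl 0
        refine ⟨?_, ?_, ?_⟩
        · rw [abs_le]; constructor <;> linarith only [hslopeI2.1, hslopeI2.2, hslopeP2.1, hslopeP2.2, hslopeS2.1, hslopeS2.2, hKsQ, hKEQ, hK1nn, hK2nn, hKnn, hcov1.1, hcov1.2, hcov2.1, hcov2.2, hsJ2.1, hsJ2.2, heJ2.1, heJ2.2, hJ'2Q, hDnn, hww', hLQ, hcz, htq]
        · rw [abs_le]; constructor <;> linarith only [hslopeI2.1, hslopeI2.2, hslopeP2.1, hslopeP2.2, hslopeS2.1, hslopeS2.2, hKsQ, hKEQ, hK1nn, hK2nn, hKnn, hcov1.1, hcov1.2, hcov2.1, hcov2.2, hsJ2.1, hsJ2.2, heJ2.1, heJ2.2, hJ'2Q, hDnn, hww', hLQ, hcz, htq]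
        · rcases abs_cases ((s.2:ℚ) - (jlo:ℚ)) with ⟨ha1, _⟩ | ⟨ha1, _⟩ <;>
            rcases abs_cases ((e.2:ℚ) - ((jlo:ℚ) + ((I.2:ℚ) - I.1))) with ⟨ha2, _⟩ | ⟨ha2, _⟩ <;>
            rw [ha1, ha2] <;> linarith only [hslopeI2.1, hslopeI2.2, hslopeP2.1, hslopeP2.2, hslopeS2.1, hslopeS2.2, hKsQ, hKEQ, hK1nn, hK2nn, hKnn, hcov1.1, hcov1.2, hcov2.1, hcov2.2, hsJ2.1, hsJ2.2, heJ2.1, heJ2.2, hJ'2Q, hDnn, hww', hLQ, hcz, htq]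
      · have hczZ : (jlo:ℤ) = (J.2:ℤ) - ((I.2 - I.1:ℕ):ℤ) := by rw [hjloZ]; omega
        have hcz : (jlo:ℚ) = (J.2:ℚ) - ((I.2:ℚ) - I.1) := by
          rw [hwnz] at hczZ; exact_mod_cast hczZ
        have htq : (J.2:ℚ) - ((I.2:ℚ) - I.1) ≤ (J'.1:ℚ) + I.1 - I'.1 := by
          rw [hwnz] at hc2
          exact_mod_cast hc2
        refine ⟨?_, ?_, ?_⟩
        · rw [abs_le]; constructor <;> linarith only [hslopeI2.1, hslopeI2.2, hslopeP2.1, hslopeP2.2, hslopeS2.1, hslopeS2.2, hKsQ, hKEQ, hK1nn, hK2nn, hKnn, hcov1.1, hcov1.2, hcov2.1, hcov2.2, hsJ2.1, hsJ2.2, heJ2.1, heJ2.2, hJ'2Q, hDnn, hww', hLQ, hcz, htq]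
        · rw [abs_le]; constructor <;> linarith only [hslopeI2.1, hslopeI2.2, hslopeP2.1, hslopeP2.2, hslopeS2.1, hslopeS2.2, hKsQ, hKEQ, hK1nn, hK2nn, hKnn, hcov1.1, hcov1.2, hcov2.1, hcov2.2, hsJ2.1, hsJ2.2, heJ2.1, heJ2.2, hJ'2Q, hDnn, hww', hLQ, hcz, htq]
        · rcases abs_cases ((s.2:ℚ) - (jlo:ℚ)) with ⟨ha1, _⟩ | ⟨ha1, _⟩ <;>
            rcases abs_cases ((e.2:ℚ) - ((jlo:ℚ) + ((I.2:ℚ) - I.1))) with ⟨ha2, _⟩ | ⟨ha2, _⟩ <;>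
            rw [ha1, ha2] <;> linarith only [hslopeI2.1, hslopeI2.2, hslopeP2.1, hslopeP2.2, hslopeS2.1, hslopeS2.2, hKsQ, hKEQ, hK1nn, hK2nn, hKnn, hcov1.1, hcov1.2, hcov2.1, hcov2.2, hsJ2.1, hsJ2.2, heJ2.1, heJ2.2, hJ'2Q, hDnn, hww', hLQ, hcz, htq]
  have hident : (ε + δ * ((I'.2:ℚ) - (I'.1:ℚ)) / ((I.2:ℚ) - (I.1:ℚ))) * ((I.2:ℚ) - (I.1:ℚ)) =
      ε * ((I.2:ℚ) - I.1) + δ * ((I'.2:ℚ) - I'.1) := by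
    rw [add_mul, div_mul_cancel₀ _ (ne_of_gt hwpos)]
  have hcast2 : ((jlo + (I.2 - I.1) : ℕ) : ℚ) = (jlo:ℚ) + ((I.2:ℚ) - (I.1:ℚ)) := by
    push_cast [Nat.cast_sub hIw.le]
    ring
  rw [hwE, hw'E]
  refine ⟨⟨s, e, hsS, heS, ?_, ?_⟩, ?_⟩
  · show |(s.2:ℚ) - ((jlo:ℕ):ℚ)| ≤
      (ε + δ * ((I'.2:ℚ) - (I'.1:ℚ)) / ((I.2:ℚ) - (I.1:ℚ))) * ((I.2:ℚ) - (I.1:ℚ))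
    rw [hident]
    exact hMain.1
  · show |(e.2:ℚ) - ((jlo + (I.2 - I.1) : ℕ):ℚ)| ≤
      (ε + δ * ((I'.2:ℚ) - (I'.1:ℚ)) / ((I.2:ℚ) - (I.1:ℚ))) * ((I.2:ℚ) - (I.1:ℚ))
    rw [hident, hcast2]
    exact hMain.2.1
  · show (boxCost x y I (jlo, jlo + (I.2 - I.1)) : ℚ) / ((I.2:ℚ) - (I.1:ℚ)) ≤
      3 * ε + 2 * δ * ((I'.2:ℚ) - (I'.1:ℚ)) / ((I.2:ℚ) - (I.1:ℚ))
    have hh2 : σI.head? = some (I.1, s.2) := by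
      rw [hsS, show (I.1, s.2) = s from Prod.ext hs1.symm rfl]
    have hl2 : σI.getLast? = some (I.2, e.2) := by
      rw [heS, show (I.2, e.2) = e from Prod.ext he1.symm rfl]
    have hbox := box_bound x y σI hchI I.1 s.2 I.2 e.2 jlo (jlo + (I.2 - I.1)) hh2 hl2
      hIw.le rfl
    rw [Prod.mk.eta] at hbox
    have hcastZ : ((jlo + (I.2 - I.1) : ℕ) : ℤ) = (jlo:ℤ) + ((I.2:ℤ) - I.1) := by omega
    rw [hcastZ] at hbox
    have hboxQ : (boxCost x y I (jlo, jlo + (I.2 - I.1)) : ℚ) ≤ (pathCost x y σI : ℚ) +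
        |(s.2:ℚ) - (jlo:ℚ)| + |(e.2:ℚ) - ((jlo:ℚ) + ((I.2:ℚ) - I.1))| := by
      exact_mod_cast hbox
    rw [div_le_iff₀ hwpos]
    have hident2 : (3 * ε + 2 * δ * ((I'.2:ℚ) - I'.1) / ((I.2:ℚ) - I.1)) * ((I.2:ℚ) - I.1) =
        3 * (ε * ((I.2:ℚ) - I.1)) + 2 * (δ * ((I'.2:ℚ) - I'.1)) := by
      rw [add_mul, div_mul_cancel₀ _ (ne_of_gt hwpos)]
      ring
    rw [hident2]
    linarith [hMain.2.2]
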